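/- Let k ≥ 2, l ≥ 3, and n be positive integers such that F_l^k exactly divides F_n, l ≡ 3 (mod 6), and 2^(k-1) does not divide n/l. Then F_l^(k-2) exactly divides n/l. -/

import Mathlib

open Nat Finset

namespace FibAux

def A : Matrix (Fin 2) (Fin 2) ℕ := !![1,1;1,0]

lemma A_sq : A * A = A + 1 := by
  ext i j
  fin_cases i <;> fin_cases j <;>
    simp [A, Matrix.mul_apply, Fin.sum_univ_succ]

lemma A_pow (m : ℕ) : A ^ (m + 1) = fib (m + 1) • A + fib m • (1 : Matrix (Fin 2) (Fin 2) ℕ) := by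
  induction m with
  | zero => simp
  | succ m ih =>
    rw [pow_succ, ih, add_mul, smul_mul_assoc, smul_mul_assoc, one_mul, A_sq, smul_add]
    rw [show m + 1 + 1 = m + 2 from rfl, fib_add_two]
    module

lemma A_entry (n : ℕ) : (A ^ n) 0 1 = fib n := by
  cases n with
  | zero => simp [Matrix.one_apply]
  | succ m =>
    rw [A_pow]
    simp [A, Matrix.one_apply, ← Matrix.diagonal_natCast, Matrix.diagonal_apply_ne]

theorem fib_mul_expand (m t : ℕ) :
    fib ((m + 1) * t)
      = ∑ i ∈ range (t + 1), t.choose i * (fib (m + 1) ^ i * (fib m ^ (t - i) * fib i)) := by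
  have hcomm : Commute (fib (m + 1) • A) (fib m • (1 : Matrix (Fin 2) (Fin 2) ℕ)) := by
    apply Commute.smul_left
    apply Commute.smul_right
    exact Commute.one_right A
  have h1 : (A ^ (m + 1)) ^ t
      = ∑ i ∈ range (t + 1),
          (fib (m + 1) • A) ^ i * (fib m • (1 : Matrix (Fin 2) (Fin 2) ℕ)) ^ (t - i)
            * (t.choose i : Matrix (Fin 2) (Fin 2) ℕ) := by
    rw [A_pow, hcomm.add_pow]
  have h2 := congrArg (fun M : Matrix (Fin 2) (Fin 2) ℕ => M 0 1) h1
  simp only [← pow_mul, A_entry] at h2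
  rw [h2, Matrix.sum_apply]
  refine Finset.sum_congr rfl fun i _ => ?_
  rw [smul_pow, smul_pow, one_pow, smul_mul_assoc, smul_mul_assoc, mul_smul_comm,
    ← Matrix.diagonal_natCast]
  simp only [Matrix.smul_apply, Matrix.mul_apply, Fin.sum_univ_succ, Fin.sum_univ_zero,
    Matrix.diagonal_apply, A_entry, smul_eq_mul]
  norm_num
  rw [A_entry]
  ring

def cseq (m t : ℕ) : ℕ :=
  ∑ j ∈ range t, t.choose (j + 1) * (fib (m + 1) ^ j * (fib m ^ (t - 1 - j) * fib (j + 1)))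

lemma fib_mul_eq (m t : ℕ) : fib ((m + 1) * t) = fib (m + 1) * cseq m t := by
  rw [fib_mul_expand, Finset.sum_range_succ']
  simp only [cseq, Finset.mul_sum, Nat.choose_zero_right, pow_zero, fib_zero, mul_zero, add_zero,
    one_mul]
  refine Finset.sum_congr rfl fun j hj => ?_
  rw [show t - (j + 1) = t - 1 - j by omega, pow_succ]
  ring

lemma cseq_succ (m t : ℕ) :
    cseq m (t + 1) = (t + 1) * fib m ^ t +
      ∑ j ∈ range t,
        (t + 1).choose (j + 2) * (fib (m + 1) ^ (j + 1) * (fib m ^ (t - 1 - j) * fib (j + 2))) := by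
  rw [cseq, Finset.sum_range_succ']
  rw [Nat.choose_one_right, pow_zero, fib_one, one_mul, mul_one, Nat.add_sub_cancel]
  rw [add_comm]
  congr 1
  refine Finset.sum_congr rfl fun j hj => ?_
  rw [show t - (j + 1) = t - 1 - j by omega]

lemma not_dvd_cseq (p : ℕ) (hp : p.Prime) (m t : ℕ) (ht : 1 ≤ t)
    (hpf : p ∣ fib (m + 1)) (hpt : ¬ p ∣ t) : ¬ p ∣ cseq m t := by
  obtain ⟨t', rfl⟩ : ∃ t', t = t' + 1 := ⟨t - 1, by omega⟩
  rw [cseq_succ]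
  intro hdvd
  have hD : p ∣ ∑ j ∈ range t',
      (t' + 1).choose (j + 2) * (fib (m + 1) ^ (j + 1) * (fib m ^ (t' - 1 - j) * fib (j + 2))) := by
    refine Finset.dvd_sum fun j hj => ?_
    exact Dvd.dvd.mul_left (Dvd.dvd.mul_right (dvd_pow hpf (Nat.succ_ne_zero j)) _) _
  have h1 : p ∣ (t' + 1) * fib m ^ t' := by
    have := Nat.dvd_sub hdvd hD
    simpa using this
  have hg : ¬ p ∣ fib m := by
    intro hg
    have := Nat.Coprime.eq_one_of_dvd
      (Nat.Coprime.coprime_dvd_left hg ((fib_coprime_fib_succ m))) hpf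
    exact hp.one_lt.ne' this
  rcases (Nat.Prime.dvd_mul hp).1 h1 with h | h
  · exact hpt h
  · exact hg (hp.dvd_of_dvd_pow h)

lemma cseq_step (p : ℕ) (hp : p.Prime) (hodd : p ≠ 2) (m : ℕ) (hpf : p ∣ fib (m + 1)) :
    p ∣ cseq m p ∧ ¬ p ^ 2 ∣ cseq m p := by
  have hp3 : 3 ≤ p := by
    rcases hp.two_le.lt_or_eq with h | h
    · omega
    · exfalso; exact hodd h.symm
  obtain ⟨q, rfl⟩ : ∃ q, p = q + 1 := ⟨p - 1, by omega⟩
  have hD : (q + 1) ^ 2 ∣ ∑ j ∈ range q,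
      (q + 1).choose (j + 2) * (fib (m + 1) ^ (j + 1) * (fib m ^ (q - 1 - j) * fib (j + 2))) := by
    refine Finset.dvd_sum fun j hj => ?_
    rcases Nat.eq_zero_or_pos j with rfl | hj1
    · have hc : (q + 1) ∣ (q + 1).choose 2 :=
        Nat.Prime.dvd_choose_self hp (by norm_num) (by omega)
      have h2 : (q + 1) ^ 2 ∣ (q + 1).choose 2 * fib (m + 1) := by
        rw [sq]
        exact mul_dvd_mul hc hpf
      calc (q + 1) ^ 2 ∣ (q + 1).choose 2 * fib (m + 1) := h2
        _ ∣ (q + 1).choose (0 + 2) * (fib (m + 1) ^ (0 + 1) * (fib m ^ (q - 1 - 0) * fib (0 + 2))) :=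
            ⟨fib m ^ (q - 1 - 0) * fib (0 + 2), by ring⟩
    · have : (q + 1) ^ 2 ∣ fib (m + 1) ^ (j + 1) := by
        calc (q + 1) ^ 2 ∣ fib (m + 1) ^ 2 := pow_dvd_pow_of_dvd hpf 2
          _ ∣ fib (m + 1) ^ (j + 1) := pow_dvd_pow _ (by omega)
      exact Dvd.dvd.mul_left (Dvd.dvd.mul_right this _) _
  have key := cseq_succ m q
  constructor
  · rw [key]
    exact Nat.dvd_add (dvd_mul_right _ _) ((dvd_pow_self (q + 1) two_ne_zero).trans hD)
  · intro hsq
    rw [key] at hsq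
    have h1 : (q + 1) ^ 2 ∣ (q + 1) * fib m ^ q := by
      have := Nat.dvd_sub hsq hD
      simpa using this
    have h2 : (q + 1) ∣ fib m ^ q := by
      rcases h1 with ⟨c, hc⟩
      rw [sq, mul_assoc] at hc
      exact ⟨c, Nat.eq_of_mul_eq_mul_left hp.pos hc⟩
    have hg : (q + 1) ∣ fib m := hp.dvd_of_dvd_pow h2
    have := Nat.Coprime.eq_one_of_dvd
      (Nat.Coprime.coprime_dvd_left hg ((fib_coprime_fib_succ m))) hpf
    exact hp.one_lt.ne' this

lemma fact_eq (p : ℕ) (hp : p.Prime) {a c : ℕ} (h1 : p ^ a ∣ c) (h2 : ¬ p ^ (a + 1) ∣ c) :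
    c.factorization p = a := by
  have hc : c ≠ 0 := by rintro rfl; exact h2 (dvd_zero _)
  refine le_antisymm ?_ ((Nat.Prime.pow_dvd_iff_le_factorization hp hc).1 h1)
  by_contra h
  exact h2 ((Nat.Prime.pow_dvd_iff_le_factorization hp hc).2 (by omega))

lemma lte_coprime (p : ℕ) (hp : p.Prime) (m t : ℕ) (hm : 1 ≤ m) (ht : 1 ≤ t)
    (hpf : p ∣ fib m) (hpt : ¬ p ∣ t) :
    (fib (m * t)).factorization p = (fib m).factorization p := by
  obtain ⟨m', rfl⟩ : ∃ m', m = m' + 1 := ⟨m - 1, by omega⟩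
  rw [fib_mul_eq]
  have hc0 : cseq m' t ≠ 0 := by
    intro h0
    have := fib_mul_eq m' t
    rw [h0, mul_zero] at this
    exact (Nat.fib_pos.2 (by positivity)).ne' this
  rw [Nat.factorization_mul (Nat.fib_pos.2 (by omega)).ne' hc0]
  have : (cseq m' t).factorization p = 0 :=
    Nat.factorization_eq_zero_of_not_dvd (not_dvd_cseq p hp m' t ht hpf hpt)
  simp [this]

lemma lte_step (p : ℕ) (hp : p.Prime) (hodd : p ≠ 2) (m : ℕ) (hm : 1 ≤ m) (hpf : p ∣ fib m) :
    (fib (m * p)).factorization p = (fib m).factorization p + 1 := by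
  obtain ⟨m', rfl⟩ : ∃ m', m = m' + 1 := ⟨m - 1, by omega⟩
  rw [fib_mul_eq]
  obtain ⟨hd, hnd⟩ := cseq_step p hp hodd m' hpf
  have hc0 : cseq m' p ≠ 0 := by
    intro h0
    rw [h0] at hnd
    exact hnd (dvd_zero _)
  rw [Nat.factorization_mul (Nat.fib_pos.2 (by omega)).ne' hc0]
  have : (cseq m' p).factorization p = 1 := fact_eq p hp (by simpa using hd) (by simpa using hnd)
  simp [this]

theorem lte (p : ℕ) (hp : p.Prime) (hodd : p ≠ 2) :
    ∀ t, 1 ≤ t → ∀ m, 1 ≤ m → p ∣ fib m →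
      (fib (m * t)).factorization p = (fib m).factorization p + t.factorization p := by
  intro t
  induction t using Nat.strong_induction_on with
  | _ t ih =>
    intro ht m hm hpf
    by_cases hpt : p ∣ t
    · obtain ⟨t', rfl⟩ := hpt
      have ht' : 1 ≤ t' := by
        rcases Nat.eq_zero_or_pos t' with rfl | h
        · simp at ht
        · exact h
      have htlt : t' < p * t' := by
        have := hp.two_le
        calc t' = 1 * t' := (one_mul t').symm
          _ < p * t' := by
            apply Nat.mul_lt_mul_of_lt_of_le (by omega) le_rfl (by omega)
      have hmp : p ∣ fib (m * p) := hpf.trans (fib_dvd m (m * p) (dvd_mul_right m p))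
      have h1 : (fib (m * (p * t'))).factorization p
          = (fib (m * p)).factorization p + t'.factorization p := by
        rw [show m * (p * t') = m * p * t' by ring]
        exact ih t' htlt ht' (m * p)
          (by exact Nat.one_le_iff_ne_zero.2 (Nat.mul_ne_zero (by omega) hp.pos.ne')) hmp
      rw [h1, lte_step p hp hodd m hm hpf]
      have : (p * t').factorization p = 1 + t'.factorization p := by
        rw [Nat.factorization_mul hp.pos.ne' (by omega)]
        simp [Nat.Prime.factorization_self hp]
      rw [this]
      ring
    · rw [lte_coprime p hp m t hm ht hpf hpt, Nat.factorization_eq_zero_of_not_dvd hpt]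
      ring

theorem v2_fib (r : ℕ) (hr : 1 ≤ r) :
    (fib (6 * r)).factorization 2 = r.factorization 2 + 3 := by
  obtain ⟨r', rfl⟩ : ∃ r', r = r' + 1 := ⟨r - 1, by omega⟩
  set r := r' + 1 with hrdef
  set v := r.factorization 2 with hv
  have hkey := cseq_succ 5 r'
  rw [show fib 5 = 5 by decide, show fib (5 + 1) = 8 by decide, ← hrdef] at hkey
  set D := ∑ j ∈ range r', r.choose (j + 2) * (8 ^ (j + 1) * (5 ^ (r' - 1 - j) * fib (j + 2)))
    with hDdef
  have hD : 2 ^ (v + 1) ∣ D := by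
    refine Finset.dvd_sum fun j hj => ?_
    set C := r.choose (j + 2) with hC
    rcases Nat.eq_zero_or_pos C with h0 | hCpos
    · rw [h0, zero_mul]
      exact dvd_zero _
    · have hid : r * r'.choose (j + 1) = C * (j + 2) := Nat.add_one_mul_choose_eq r' (j + 1)
      have hdvd1 : 2 ^ v ∣ C * (j + 2) := hid ▸ (Nat.ordProj_dvd r 2).mul_right _
      have hle1 : v ≤ C.factorization 2 + (j + 2).factorization 2 := by
        have hne : C * (j + 2) ≠ 0 := by positivity
        have := (Nat.Prime.pow_dvd_iff_le_factorization Nat.prime_two hne).1 hdvd1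
        rwa [Nat.factorization_mul hCpos.ne' (by omega)] at this
      have hw : (j + 2).factorization 2 ≤ j + 1 := by
        have h1 : 2 ^ ((j + 2).factorization 2) ≤ j + 2 :=
          Nat.le_of_dvd (by omega) (Nat.ordProj_dvd _ 2)
        have h2 : (j + 2 : ℕ) < 2 ^ (j + 2) := (j + 2).lt_two_pow_self
        have := lt_of_le_of_lt h1 h2
        have := (Nat.pow_lt_pow_iff_right (a := 2) one_lt_two).1 this
        omega
      have hle2 : v + 1 ≤ C.factorization 2 + 3 * (j + 1) := by omega
      have hdvd2 : 2 ^ (C.factorization 2 + 3 * (j + 1)) ∣ C * 8 ^ (j + 1) := by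
        rw [pow_add]
        exact mul_dvd_mul (Nat.ordProj_dvd _ 2) (by rw [pow_mul]; norm_num)
      calc 2 ^ (v + 1) ∣ 2 ^ (C.factorization 2 + 3 * (j + 1)) := pow_dvd_pow 2 hle2
        _ ∣ C * 8 ^ (j + 1) := hdvd2
        _ ∣ C * (8 ^ (j + 1) * (5 ^ (r' - 1 - j) * fib (j + 2))) :=
            by rw [← mul_assoc]; exact dvd_mul_right _ _
  have hu : 2 ^ v ∣ r * 5 ^ r' := (Nat.ordProj_dvd r 2).mul_right _
  have hnu : ¬ 2 ^ (v + 1) ∣ r * 5 ^ r' := by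
    intro h
    have hco : Nat.Coprime (2 ^ (v + 1)) (5 ^ r') :=
      Nat.Coprime.pow (v + 1) r' (by norm_num)
    have h2 : 2 ^ (v + 1) ∣ r := hco.dvd_of_dvd_mul_right h
    have := (Nat.Prime.pow_dvd_iff_le_factorization Nat.prime_two (by omega)).1 h2
    omega
  have hcv : (cseq 5 r).factorization 2 = v := by
    refine fact_eq 2 Nat.prime_two ?_ ?_
    · rw [hkey]
      exact Nat.dvd_add hu ((pow_dvd_pow 2 (by omega)).trans hD)
    · intro h
      rw [hkey] at h
      have := Nat.dvd_sub h hD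
      exact hnu (by simpa using this)
  have hc0 : cseq 5 r ≠ 0 := by
    intro h0
    rw [h0] at hkey
    have : 0 < r * 5 ^ r' := by positivity
    omega
  have h6 : fib (6 * r) = 8 * cseq 5 r := by
    rw [show (6 : ℕ) = 5 + 1 from rfl, fib_mul_eq]
    norm_num
  rw [h6, Nat.factorization_mul (by norm_num) hc0]
  have h8 : (8 : ℕ).factorization 2 = 3 := by
    rw [show (8 : ℕ) = 2 ^ 3 by norm_num, Nat.Prime.factorization_pow Nat.prime_two]
    simp
  simp [h8, hcv]
  omega

lemma fib_add_six_mod_four (n : ℕ) : fib (n + 6) % 4 = fib n % 4 := by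
  have h := fib_add 5 n
  rw [show 5 + n + 1 = n + 6 by omega] at h
  rw [h, show fib 5 = 5 by decide, show fib (5 + 1) = 8 by decide]
  omega

lemma fib_mod_four_of_mod_six (n : ℕ) (h : n % 6 = 3) : fib n % 4 = 2 := by
  induction n using Nat.strong_induction_on with
  | _ n ih =>
    rcases lt_or_ge n 6 with h6 | h6
    · have hn3 : n = 3 := by omega
      subst hn3
      decide
    · obtain ⟨m, rfl⟩ : ∃ m, n = m + 6 := ⟨n - 6, by omega⟩
      rw [fib_add_six_mod_four]
      exact ih m (by omega) (by omega)

end FibAux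

theorem exact_div_fib_of_three_mod_six_of_not_two_pow_dvd (k l n : ℕ)
    (hk : 2 ≤ k) (hl : 3 ≤ l) (hn : 1 ≤ n)
    (hdvd : Nat.fib l ^ k ∣ Nat.fib n) (hndvd : ¬ Nat.fib l ^ (k + 1) ∣ Nat.fib n)
    (hmod : l % 6 = 3) (h2 : ¬ 2 ^ (k - 1) ∣ n / l) :
    Nat.fib l ^ (k - 2) ∣ n / l ∧ ¬ Nat.fib l ^ (k - 1) ∣ n / l := by
  classical
  have hl2 : l % 2 = 1 := by omega
  have h3l : (3 : ℕ) ∣ l := by omega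
  have hfl4 : Nat.fib l % 4 = 2 := FibAux.fib_mod_four_of_mod_six l hmod
  have hfln : Nat.fib l ≠ 0 := by omega
  have hfnn : Nat.fib n ≠ 0 := (Nat.fib_pos.2 hn).ne'
  -- l ∣ n
  have hfd : Nat.fib l ∣ Nat.fib n := (dvd_pow_self (Nat.fib l) (by omega : k ≠ 0)).trans hdvd
  have hgcd : Nat.fib (Nat.gcd l n) = Nat.fib l := by
    rw [Nat.fib_gcd]; exact Nat.gcd_eq_left hfd
  have hgl : Nat.gcd l n = l := by
    have hgle : Nat.gcd l n ≤ l := Nat.le_of_dvd (by omega) (Nat.gcd_dvd_left l n)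
    by_contra hne
    have hlt : Nat.gcd l n < l := lt_of_le_of_ne hgle hne
    have hg2 : 2 ≤ Nat.gcd l n := by
      by_contra hh
      have := Nat.fib_mono (show Nat.gcd l n ≤ 2 by omega)
      rw [hgcd] at this
      have h21 : Nat.fib 2 = 1 := by decide
      omega
    have := (Nat.fib_lt_fib hg2).2 hlt
    omega
  have hln : l ∣ n := hgl ▸ Nat.gcd_dvd_right l n
  set m0 := n / l with hm0def
  have hnm : n = l * m0 := (Nat.mul_div_cancel' hln).symm
  have hm0pos : 1 ≤ m0 := by
    rcases Nat.eq_zero_or_pos m0 with h0 | h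
    · rw [h0, mul_zero] at hnm; omega
    · exact h
  have hm0ne : m0 ≠ 0 := by omega
  have part2 : ¬ Nat.fib l ^ (k - 1) ∣ m0 := by
    intro hdv
    apply h2
    have h2fl : (2 : ℕ) ∣ Nat.fib l := by omega
    exact (pow_dvd_pow_of_dvd h2fl (k - 1)).trans hdv
  refine ⟨?_, part2⟩
  rw [← Nat.factorization_le_iff_dvd (pow_ne_zero _ hfln) hm0ne, Finsupp.le_def]
  intro p
  rw [Nat.factorization_pow]
  simp only [Finsupp.smul_apply, smul_eq_mul]
  by_cases hp : p.Prime
  swap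
  · simp [Nat.factorization_eq_zero_of_not_prime _ hp]
  set e := (Nat.fib l).factorization p with he
  rcases Nat.eq_zero_or_pos e with he0 | hepos
  · rw [he0, mul_zero]
    exact Nat.zero_le _
  have hpfl : p ∣ Nat.fib l := Nat.dvd_of_factorization_pos (by omega)
  have hkv : k * e ≤ (Nat.fib n).factorization p := by
    apply (Nat.Prime.pow_dvd_iff_le_factorization hp hfnn).1
    calc p ^ (k * e) = (p ^ e) ^ k := by rw [← pow_mul, mul_comm]
      _ ∣ Nat.fib l ^ k := pow_dvd_pow_of_dvd (Nat.ordProj_dvd _ p) k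
      _ ∣ Nat.fib n := hdvd
  by_cases hp2 : p = 2
  · subst hp2
    have he1 : e = 1 := by
      rw [he]
      refine FibAux.fact_eq 2 Nat.prime_two ?_ ?_
      · rw [pow_one]; omega
      · rw [show (2 : ℕ) ^ (1 + 1) = 4 by norm_num]; omega
    rw [he1, mul_one] at hkv
    have hm0even : 2 ∣ m0 := by
      by_contra hodd
      have hm1 : m0 % 2 = 1 := by omega
      have hn6 : n % 6 = 3 := by
        have h1 : n % 2 = 1 := by
          rw [hnm, Nat.mul_mod, hl2, hm1]
        have hq2 : n % 3 = 0 := by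
          have : (3 : ℕ) ∣ n := h3l.trans ⟨m0, hnm⟩
          omega
        omega
      have hmod4 := FibAux.fib_mod_four_of_mod_six n hn6
      have h4 : (2 : ℕ) ^ 2 ∣ Nat.fib n := by
        apply (Nat.Prime.pow_dvd_iff_le_factorization Nat.prime_two hfnn).2
        omega
      rcases h4 with ⟨c, hc⟩
      omega
    have h6n : (6 : ℕ) ∣ n := by
      have ha : (2 : ℕ) ∣ n := hm0even.trans ⟨l, by rw [hnm]; ring⟩
      have hb : (3 : ℕ) ∣ n := h3l.trans ⟨m0, hnm⟩
      omega
    obtain ⟨r, hr⟩ := h6n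
    have hrpos : 1 ≤ r := by
      rcases Nat.eq_zero_or_pos r with rfl | h
      · omega
      · exact h
    have hv2 := FibAux.v2_fib r hrpos
    rw [← hr] at hv2
    have hrne : r ≠ 0 := by omega
    have h61 : (6 : ℕ).factorization 2 = 1 :=
      FibAux.fact_eq 2 Nat.prime_two (by norm_num) (by norm_num)
    have hveq1 : n.factorization 2 = r.factorization 2 + 1 := by
      rw [hr, Nat.factorization_mul (by norm_num) hrne]
      simp [h61]
      omega
    have hveq2 : n.factorization 2 = m0.factorization 2 := by
      rw [hnm, Nat.factorization_mul (by omega) hm0ne]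
      have hl0 : l.factorization 2 = 0 := Nat.factorization_eq_zero_of_not_dvd (by omega)
      simp [hl0]
    rw [he1, mul_one]
    omega
  · have hlte := FibAux.lte p hp hp2 m0 hm0pos l (by omega) hpfl
    rw [← hnm] at hlte
    have h1 : k * e ≤ e + m0.factorization p := by
      rw [hlte] at hkv
      rw [← he] at hkv
      omega
    have h2e : k * e = (k - 1) * e + e := by
      cases k with
      | zero => omega
      | succ k' => rw [Nat.succ_sub_one]; ring
    calc (k - 2) * e ≤ (k - 1) * e := Nat.mul_le_mul_right _ (by omega)
      _ ≤ m0.factorization p := by omega
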